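/- arXiv:1909.02054 — 2 statements merged into one kernel-verified Lean document; each statement's English description precedes it below -/
import Mathlib

section
/- For probability measures μ, ν on ℝ with finite second moments, W₂(μ,ν)² = ∫_0^1 |X_μ(m) - X_ν(m)|² dm, where X_μ and X_ν are the inverse cumulative distribution functions of μ and ν. -/
open MeasureTheory Set
open scoped ENNReal

/-- Squared Wasserstein-2 distance on ℝ, defined via couplings. -/
noncomputable def W2sq (μ ν : Measure ℝ) : ℝ≥0∞ :=
  ⨅ γ ∈ {γ : Measure (ℝ × ℝ) | γ.map Prod.fst = μ ∧ γ.map Prod.snd = ν},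
    ∫⁻ p, ENNReal.ofReal ((p.1 - p.2) ^ 2) ∂γ

/-- Inverse cumulative distribution function `X m = inf {x | μ((-∞,x]) > m}`. -/
noncomputable def icdf (μ : Measure ℝ) (m : ℝ) : ℝ :=
  sInf {x : ℝ | m < (μ (Iic x)).toReal}

section Aux

open ProbabilityTheory Filter

variable (μ : Measure ℝ) [IsProbabilityMeasure μ]

lemma icdf_S_nonempty {m : ℝ} (hm1 : m < 1) :
    {x : ℝ | m < (μ (Iic x)).toReal}.Nonempty := by
  have h : ∀ᶠ x in atTop, m < cdf μ x := (tendsto_cdf_atTop μ).eventually_const_lt hm1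
  obtain ⟨x, hx⟩ := h.exists
  exact ⟨x, by rwa [cdf_eq_real, measureReal_def] at hx⟩

lemma icdf_S_bddBelow {m : ℝ} (hm0 : 0 < m) :
    BddBelow {x : ℝ | m < (μ (Iic x)).toReal} := by
  have h : ∀ᶠ x in atBot, cdf μ x < m := (tendsto_cdf_atBot μ).eventually_lt_const hm0
  obtain ⟨x₀, hx₀⟩ := eventually_atBot.mp h
  refine ⟨x₀, fun y hy => ?_⟩
  by_contra hlt
  push_neg at hlt
  have := hx₀ y hlt.le
  rw [cdf_eq_real, measureReal_def] at this
  exact absurd hy (by simp [not_lt]; linarith)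

lemma icdf_le {m x : ℝ} (hm0 : 0 < m) (hx : m < (μ (Iic x)).toReal) :
    icdf μ m ≤ x :=
  csInf_le (icdf_S_bddBelow μ hm0) hx

lemma le_cdf_of_icdf_le {m x : ℝ} (hm1 : m < 1) (h : icdf μ m ≤ x) :
    m ≤ (μ (Iic x)).toReal := by
  rw [← measureReal_def, ← cdf_eq_real]
  have hc : Filter.Tendsto (cdf μ) (nhdsWithin x (Ioi x)) (nhds (cdf μ x)) :=
    ((cdf μ).right_continuous x).mono_left (nhdsWithin_mono x Ioi_subset_Ici_self)
  refine ge_of_tendsto hc ?_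
  filter_upwards [eventually_mem_nhdsWithin] with y hy
  obtain ⟨z, hz, hzy⟩ := exists_lt_of_csInf_lt (icdf_S_nonempty μ hm1) (lt_of_le_of_lt h hy)
  rw [cdf_eq_real, measureReal_def]
  calc m ≤ (μ (Iic z)).toReal := le_of_lt hz
  _ ≤ (μ (Iic y)).toReal :=
    ENNReal.toReal_mono (measure_ne_top μ _) (measure_mono (Iic_subset_Iic.2 hzy.le))

lemma measure_Iio_eq_iSup (t : ℝ) :
    μ (Iio t) = ⨆ n : ℕ, μ (Iic (t - 1 / (n + 1))) := by
  have hU : Iio t = ⋃ n : ℕ, Iic (t - 1 / (n + 1)) := by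
    ext z
    simp only [mem_Iio, mem_iUnion, mem_Iic]
    constructor
    · intro hz
      obtain ⟨n, hn⟩ := exists_nat_one_div_lt (sub_pos.2 hz)
      exact ⟨n, by linarith⟩
    · rintro ⟨n, hn⟩
      have : (0:ℝ) < 1 / (n + 1) := by positivity
      linarith
  rw [hU]
  refine Monotone.measure_iUnion (fun a b hab => Iic_subset_Iic.2 ?_)
  have : (1:ℝ) / (b + 1) ≤ 1 / (a + 1) := by
    gcongr
  linarith

lemma icdf_lt_iff {m t : ℝ} (hm0 : 0 < m) (hm1 : m < 1) :
    icdf μ m < t ↔ m < (μ (Iio t)).toReal := by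
  constructor
  · intro h
    obtain ⟨z, hz, hzt⟩ := exists_lt_of_csInf_lt (icdf_S_nonempty μ hm1) h
    calc m < (μ (Iic z)).toReal := hz
    _ ≤ (μ (Iio t)).toReal :=
      ENNReal.toReal_mono (measure_ne_top μ _) (measure_mono (Iic_subset_Iio.2 hzt))
  · intro h
    have h' : ENNReal.ofReal m < μ (Iio t) :=
      (ENNReal.ofReal_lt_iff_lt_toReal hm0.le (measure_ne_top μ _)).2 h
    rw [measure_Iio_eq_iSup μ t, lt_iSup_iff] at h'
    obtain ⟨n, hn⟩ := h'
    have hmn : m < (μ (Iic (t - 1 / (n + 1)))).toReal :=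
      (ENNReal.ofReal_lt_iff_lt_toReal hm0.le (measure_ne_top μ _)).1 hn
    have hpos : (0:ℝ) < 1 / (n + 1) := by positivity
    calc icdf μ m ≤ t - 1 / (n + 1) := icdf_le μ hm0 hmn
    _ < t := by linarith

lemma icdf_monotoneOn : MonotoneOn (icdf μ) (Ioo (0:ℝ) 1) := by
  intro a ha b hb hab
  exact csInf_le_csInf (icdf_S_bddBelow μ ha.1) (icdf_S_nonempty μ hb.2)
    (fun x hx => lt_of_le_of_lt hab hx)

lemma icdf_aemeasurable : AEMeasurable (icdf μ) (volume.restrict (Ioo (0:ℝ) 1)) :=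
  aemeasurable_restrict_of_monotoneOn measurableSet_Ioo (icdf_monotoneOn μ)

lemma map_icdf : (volume.restrict (Ioo (0:ℝ) 1)).map (icdf μ) = μ := by
  haveI : IsProbabilityMeasure ((volume.restrict (Ioo (0:ℝ) 1)).map (icdf μ)) := by
    constructor
    rw [Measure.map_apply_of_aemeasurable (icdf_aemeasurable μ) MeasurableSet.univ,
      preimage_univ, Measure.restrict_apply MeasurableSet.univ, univ_inter, Real.volume_Ioo]
    norm_num
  refine Measure.ext_of_Iic _ μ (fun x => ?_)
  rw [Measure.map_apply_of_aemeasurable (icdf_aemeasurable μ) measurableSet_Iic,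
    Measure.restrict_apply' measurableSet_Ioo]
  have hF0 : (0:ℝ) ≤ (μ (Iic x)).toReal := ENNReal.toReal_nonneg
  have hF1 : (μ (Iic x)).toReal ≤ 1 := by
    have := ENNReal.toReal_mono (by simp) (prob_le_one (μ := μ) (s := Iic x))
    simpa using this
  have h1 : Ioo 0 ((μ (Iic x)).toReal) ⊆ icdf μ ⁻¹' Iic x ∩ Ioo 0 1 := by
    intro m hm
    have hm1 : m < 1 := lt_of_lt_of_le hm.2 hF1
    exact ⟨icdf_le μ hm.1 hm.2, hm.1, hm1⟩
  have h2 : icdf μ ⁻¹' Iic x ∩ Ioo 0 1 ⊆ Icc 0 ((μ (Iic x)).toReal) := by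
    rintro m ⟨hmx, hm0, hm1⟩
    exact ⟨hm0.le, le_cdf_of_icdf_le μ hm1 hmx⟩
  refine le_antisymm ?_ ?_
  · calc volume (icdf μ ⁻¹' Iic x ∩ Ioo 0 1) ≤ volume (Icc 0 ((μ (Iic x)).toReal)) :=
        measure_mono h2
    _ = ENNReal.ofReal ((μ (Iic x)).toReal) := by rw [Real.volume_Icc, sub_zero]
    _ = μ (Iic x) := ENNReal.ofReal_toReal (measure_ne_top μ _)
  · calc μ (Iic x) = ENNReal.ofReal ((μ (Iic x)).toReal) :=
        (ENNReal.ofReal_toReal (measure_ne_top μ _)).symm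
    _ = volume (Ioo 0 ((μ (Iic x)).toReal)) := by rw [Real.volume_Ioo, sub_zero]
    _ ≤ volume (icdf μ ⁻¹' Iic x ∩ Ioo 0 1) := measure_mono h1

end Aux

section Aux2

variable (μ ν : Measure ℝ) [IsProbabilityMeasure μ] [IsProbabilityMeasure ν]

lemma vol_icdf_inter (s t : ℝ) :
    volume ({m : ℝ | icdf ν m ≤ s ∧ t ≤ icdf μ m} ∩ Ioo (0:ℝ) 1)
      = ν (Iic s) + μ (Ici t) - 1 := by
  set a : ℝ := (μ (Iio t)).toReal with ha_def
  set b : ℝ := (ν (Iic s)).toReal with hb_def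
  have ha0 : 0 ≤ a := ENNReal.toReal_nonneg
  have hb0 : 0 ≤ b := ENNReal.toReal_nonneg
  have ha1 : a ≤ 1 := by
    have := ENNReal.toReal_mono (by simp) (prob_le_one (μ := μ) (s := Iio t))
    simpa using this
  have hb1 : b ≤ 1 := by
    have := ENNReal.toReal_mono (by simp) (prob_le_one (μ := ν) (s := Iic s))
    simpa using this
  have h1 : Ioo a b ⊆ {m : ℝ | icdf ν m ≤ s ∧ t ≤ icdf μ m} ∩ Ioo (0:ℝ) 1 := by
    intro m hm
    have hm0 : 0 < m := lt_of_le_of_lt ha0 hm.1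
    have hm1 : m < 1 := lt_of_lt_of_le hm.2 hb1
    refine ⟨⟨icdf_le ν hm0 hm.2, ?_⟩, hm0, hm1⟩
    by_contra hlt
    push_neg at hlt
    exact absurd ((icdf_lt_iff μ hm0 hm1).1 hlt) (not_lt.2 hm.1.le)
  have h2 : {m : ℝ | icdf ν m ≤ s ∧ t ≤ icdf μ m} ∩ Ioo (0:ℝ) 1 ⊆ Icc a b := by
    rintro m ⟨⟨hms, hmt⟩, hm0, hm1⟩
    refine ⟨?_, le_cdf_of_icdf_le ν hm1 hms⟩
    by_contra hlt
    push_neg at hlt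
    exact absurd ((icdf_lt_iff μ hm0 hm1).2 hlt) (not_lt.2 hmt)
  have hvol : volume ({m : ℝ | icdf ν m ≤ s ∧ t ≤ icdf μ m} ∩ Ioo (0:ℝ) 1)
      = ENNReal.ofReal (b - a) := by
    refine le_antisymm ?_ ?_
    · calc volume _ ≤ volume (Icc a b) := measure_mono h2
      _ = ENNReal.ofReal (b - a) := Real.volume_Icc
    · calc ENNReal.ofReal (b - a) = volume (Ioo a b) := Real.volume_Ioo.symm
      _ ≤ _ := measure_mono h1
  rw [hvol]
  have hIci : μ (Ici t) = 1 - ENNReal.ofReal a := by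
    rw [ha_def, ENNReal.ofReal_toReal (measure_ne_top μ _), ← compl_Iio,
      measure_compl measurableSet_Iio (measure_ne_top μ _), measure_univ]
  have hIic : ν (Iic s) = ENNReal.ofReal b := (ENNReal.ofReal_toReal (measure_ne_top ν _)).symm
  rw [hIci, hIic]
  have h1a : (1:ℝ≥0∞) - ENNReal.ofReal a = ENNReal.ofReal (1 - a) := by
    rw [ENNReal.ofReal_sub _ ha0, ENNReal.ofReal_one]
  rw [h1a, ← ENNReal.ofReal_add hb0 (by linarith),
    show (1:ℝ≥0∞) = ENNReal.ofReal 1 from ENNReal.ofReal_one.symm,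
    ← ENNReal.ofReal_sub _ zero_le_one]
  congr 1
  ring

end Aux2

/-- The open triangle `{(s,t) | y ≤ s < t ≤ x}`. -/
def Tri (x y : ℝ) : Set (ℝ × ℝ) := {q | q.1 < q.2 ∧ y ≤ q.1 ∧ q.2 ≤ x}

lemma Tri_measurableSet (x y : ℝ) : MeasurableSet (Tri x y) :=
  (measurableSet_lt measurable_fst measurable_snd).inter
    ((measurableSet_le measurable_const measurable_fst).inter
      (measurableSet_le measurable_snd measurable_const))

lemma Tri_empty {x y : ℝ} (h : x ≤ y) : Tri x y = ∅ := by
  ext q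
  simp only [Tri, mem_setOf_eq, mem_empty_iff_false, iff_false]
  rintro ⟨h1, h2, h3⟩
  linarith

lemma Tri_volume {x y : ℝ} (h : y ≤ x) :
    volume (Tri x y) = ENNReal.ofReal ((x - y) ^ 2 / 2) := by
  rw [MeasureTheory.Measure.volume_eq_prod, Measure.prod_apply (Tri_measurableSet x y)]
  have hsl : (fun s => volume (Prod.mk s ⁻¹' Tri x y))
      = fun s => (Ici y).indicator (fun s => ENNReal.ofReal (x - s)) s := by
    funext s
    by_cases hs : y ≤ s
    · have : Prod.mk s ⁻¹' Tri x y = Ioc s x := by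
        ext u; simp [Tri, hs, and_comm]
      rw [this, Set.indicator_of_mem (mem_Ici.2 hs), Real.volume_Ioc]
    · have : Prod.mk s ⁻¹' Tri x y = ∅ := by
        ext u; simp [Tri, hs]
      rw [this, Set.indicator_of_notMem (fun h' => hs (mem_Ici.1 h')), measure_empty]
  rw [hsl, lintegral_indicator measurableSet_Ici,
    ← Icc_union_Ioi_eq_Ici h, lintegral_union measurableSet_Ioi
      (Disjoint.mono_left Icc_subset_Iic_self (Iic_disjoint_Ioi le_rfl))]
  have hzero : ∫⁻ s in Ioi x, ENNReal.ofReal (x - s) = 0 := by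
    rw [setLIntegral_congr_fun measurableSet_Ioi
      (fun s (hs : x < s) =>
        ENNReal.ofReal_of_nonpos (by linarith))]
    simp
  have hint : IntegrableOn (fun s => x - s) (Icc y x) volume :=
    (continuous_const.sub continuous_id).integrableOn_Icc
  have hnn : 0 ≤ᵐ[volume.restrict (Icc y x)] fun s => x - s :=
    (ae_restrict_iff' measurableSet_Icc).2
      (Filter.Eventually.of_forall (fun s hs => by
        simp only [Pi.zero_apply]; linarith [hs.2]))
  rw [hzero, add_zero, ← ofReal_integral_eq_lintegral_ofReal hint hnn,
    MeasureTheory.integral_Icc_eq_integral_Ioc, ← intervalIntegral.integral_of_le h]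
  congr 1
  rw [intervalIntegral.integral_sub intervalIntegrable_const intervalIntegral.intervalIntegrable_id,
    intervalIntegral.integral_const, integral_id]
  simp only [smul_eq_mul]
  ring

lemma pointwise_sq (x y : ℝ) :
    ENNReal.ofReal ((x - y) ^ 2) = 2 * (volume (Tri x y) + volume (Tri y x)) := by
  have h2 : (2:ℝ≥0∞) = ENNReal.ofReal 2 := by norm_num
  rcases le_total x y with h | h
  · rw [Tri_empty h, Tri_volume h, measure_empty, zero_add, h2,
      ← ENNReal.ofReal_mul (by norm_num)]
    congr 1
    ring
  · rw [Tri_empty h, Tri_volume h, measure_empty, add_zero, h2,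
      ← ENNReal.ofReal_mul (by norm_num)]
    congr 1
    ring

/-- Parameter set for the first triangle family. -/
def U₁ : Set ((ℝ × ℝ) × (ℝ × ℝ)) := {r | r.2.1 < r.2.2 ∧ r.1.2 ≤ r.2.1 ∧ r.2.2 ≤ r.1.1}

/-- Parameter set for the second triangle family. -/
def U₂ : Set ((ℝ × ℝ) × (ℝ × ℝ)) := {r | r.2.1 < r.2.2 ∧ r.1.1 ≤ r.2.1 ∧ r.2.2 ≤ r.1.2}

lemma U₁_measurableSet : MeasurableSet U₁ :=
  (measurableSet_lt (measurable_fst.comp measurable_snd)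
      (measurable_snd.comp measurable_snd)).inter
    ((measurableSet_le (measurable_snd.comp measurable_fst)
        (measurable_fst.comp measurable_snd)).inter
      (measurableSet_le (measurable_snd.comp measurable_snd)
        (measurable_fst.comp measurable_fst)))

lemma U₂_measurableSet : MeasurableSet U₂ :=
  (measurableSet_lt (measurable_fst.comp measurable_snd)
      (measurable_snd.comp measurable_snd)).inter
    ((measurableSet_le (measurable_fst.comp measurable_fst)
        (measurable_fst.comp measurable_snd)).inter
      (measurableSet_le (measurable_snd.comp measurable_snd)
        (measurable_snd.comp measurable_fst)))

lemma preimage_U₁ (p : ℝ × ℝ) : Prod.mk p ⁻¹' U₁ = Tri p.1 p.2 := rfl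

lemma preimage_U₂ (p : ℝ × ℝ) : Prod.mk p ⁻¹' U₂ = Tri p.2 p.1 := rfl

/-- Representation of the transport cost as twice the product measure of two sets. -/
lemma cost_rep (γ : Measure (ℝ × ℝ)) [IsProbabilityMeasure γ] :
    ∫⁻ p, ENNReal.ofReal ((p.1 - p.2) ^ 2) ∂γ
      = 2 * ((γ.prod volume) U₁ + (γ.prod volume) U₂) := by
  have hm1 : Measurable fun p : ℝ × ℝ => volume (Prod.mk p ⁻¹' U₁) :=
    measurable_measure_prodMk_left U₁_measurableSet
  have hm2 : Measurable fun p : ℝ × ℝ => volume (Prod.mk p ⁻¹' U₂) :=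
    measurable_measure_prodMk_left U₂_measurableSet
  calc ∫⁻ p, ENNReal.ofReal ((p.1 - p.2) ^ 2) ∂γ
      = ∫⁻ p, 2 * (volume (Prod.mk p ⁻¹' U₁) + volume (Prod.mk p ⁻¹' U₂)) ∂γ := by
        refine lintegral_congr fun p => ?_
        rw [preimage_U₁, preimage_U₂]
        exact pointwise_sq p.1 p.2
    _ = 2 * (∫⁻ p, volume (Prod.mk p ⁻¹' U₁) ∂γ + ∫⁻ p, volume (Prod.mk p ⁻¹' U₂) ∂γ) := by
        rw [lintegral_const_mul 2 (f := fun p => volume (Prod.mk p ⁻¹' U₁) + volume (Prod.mk p ⁻¹' U₂)) (hm1.add hm2), lintegral_add_left hm1]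
    _ = 2 * ((γ.prod volume) U₁ + (γ.prod volume) U₂) := by
        rw [Measure.prod_apply U₁_measurableSet, Measure.prod_apply U₂_measurableSet]


section Coupling

variable (μ ν : Measure ℝ) [IsProbabilityMeasure μ] [IsProbabilityMeasure ν]

/-- Fréchet–Hoeffding-type lower bound for a coupling. -/
lemma gamma_ge₁ (γ : Measure (ℝ × ℝ)) [IsProbabilityMeasure γ]
    (h1 : γ.map Prod.fst = μ) (h2 : γ.map Prod.snd = ν) (s t : ℝ) :
    ν (Iic s) + μ (Ici t) - 1 ≤ γ {p : ℝ × ℝ | p.2 ≤ s ∧ t ≤ p.1} := by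
  have hA : γ {p : ℝ × ℝ | t ≤ p.1} = μ (Ici t) := by
    rw [← h1, Measure.map_apply measurable_fst measurableSet_Ici]; rfl
  have hB : γ {p : ℝ × ℝ | p.2 ≤ s} = ν (Iic s) := by
    rw [← h2, Measure.map_apply measurable_snd measurableSet_Iic]; rfl
  have hset : {p : ℝ × ℝ | p.2 ≤ s ∧ t ≤ p.1}
      = {p : ℝ × ℝ | p.2 ≤ s} ∩ {p : ℝ × ℝ | t ≤ p.1} := rfl
  rw [hset, ← hA, ← hB, tsub_le_iff_right]
  calc γ {p : ℝ × ℝ | p.2 ≤ s} + γ {p : ℝ × ℝ | t ≤ p.1}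
      = γ ({p : ℝ × ℝ | p.2 ≤ s} ∪ {p : ℝ × ℝ | t ≤ p.1})
        + γ ({p : ℝ × ℝ | p.2 ≤ s} ∩ {p : ℝ × ℝ | t ≤ p.1}) :=
        (measure_union_add_inter _ (measurableSet_le measurable_const measurable_fst)).symm
    _ ≤ 1 + γ ({p : ℝ × ℝ | p.2 ≤ s} ∩ {p : ℝ × ℝ | t ≤ p.1}) :=
        add_le_add_left prob_le_one _
    _ = γ ({p : ℝ × ℝ | p.2 ≤ s} ∩ {p : ℝ × ℝ | t ≤ p.1}) + 1 := add_comm _ _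

lemma gamma_ge₂ (γ : Measure (ℝ × ℝ)) [IsProbabilityMeasure γ]
    (h1 : γ.map Prod.fst = μ) (h2 : γ.map Prod.snd = ν) (s t : ℝ) :
    μ (Iic s) + ν (Ici t) - 1 ≤ γ {p : ℝ × ℝ | p.1 ≤ s ∧ t ≤ p.2} := by
  have hA : γ {p : ℝ × ℝ | t ≤ p.2} = ν (Ici t) := by
    rw [← h2, Measure.map_apply measurable_snd measurableSet_Ici]; rfl
  have hB : γ {p : ℝ × ℝ | p.1 ≤ s} = μ (Iic s) := by
    rw [← h1, Measure.map_apply measurable_fst measurableSet_Iic]; rfl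
  have hset : {p : ℝ × ℝ | p.1 ≤ s ∧ t ≤ p.2}
      = {p : ℝ × ℝ | p.1 ≤ s} ∩ {p : ℝ × ℝ | t ≤ p.2} := rfl
  rw [hset, ← hA, ← hB, tsub_le_iff_right]
  calc γ {p : ℝ × ℝ | p.1 ≤ s} + γ {p : ℝ × ℝ | t ≤ p.2}
      = γ ({p : ℝ × ℝ | p.1 ≤ s} ∪ {p : ℝ × ℝ | t ≤ p.2})
        + γ ({p : ℝ × ℝ | p.1 ≤ s} ∩ {p : ℝ × ℝ | t ≤ p.2}) :=
        (measure_union_add_inter _ (measurableSet_le measurable_const measurable_snd)).symm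
    _ ≤ 1 + γ ({p : ℝ × ℝ | p.1 ≤ s} ∩ {p : ℝ × ℝ | t ≤ p.2}) :=
        add_le_add_left prob_le_one _
    _ = γ ({p : ℝ × ℝ | p.1 ≤ s} ∩ {p : ℝ × ℝ | t ≤ p.2}) + 1 := add_comm _ _

/-- The quantile coupling. -/
noncomputable def qcoupling : Measure (ℝ × ℝ) :=
  (volume.restrict (Ioo (0:ℝ) 1)).map (fun m => (icdf μ m, icdf ν m))

lemma qcoupling_pair_aemeasurable :
    AEMeasurable (fun m => (icdf μ m, icdf ν m)) (volume.restrict (Ioo (0:ℝ) 1)) :=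
  (icdf_aemeasurable μ).prodMk (icdf_aemeasurable ν)

lemma qcoupling_fst : (qcoupling μ ν).map Prod.fst = μ := by
  rw [qcoupling, AEMeasurable.map_map_of_aemeasurable measurable_fst.aemeasurable
    (qcoupling_pair_aemeasurable μ ν)]
  exact map_icdf μ

lemma qcoupling_snd : (qcoupling μ ν).map Prod.snd = ν := by
  rw [qcoupling, AEMeasurable.map_map_of_aemeasurable measurable_snd.aemeasurable
    (qcoupling_pair_aemeasurable μ ν)]
  exact map_icdf ν

lemma isProbabilityMeasure_of_fst (γ : Measure (ℝ × ℝ)) (h1 : γ.map Prod.fst = μ) :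
    IsProbabilityMeasure γ := by
  constructor
  have h2 := Measure.map_apply (μ := γ) measurable_fst MeasurableSet.univ
  rw [h1] at h2
  simpa using h2.symm

instance : IsProbabilityMeasure (qcoupling μ ν) :=
  isProbabilityMeasure_of_fst μ (qcoupling μ ν) (qcoupling_fst μ ν)

lemma qcoupling_slice₁ (s t : ℝ) :
    qcoupling μ ν {p : ℝ × ℝ | p.2 ≤ s ∧ t ≤ p.1} = ν (Iic s) + μ (Ici t) - 1 := by
  have hs : MeasurableSet {p : ℝ × ℝ | p.2 ≤ s ∧ t ≤ p.1} :=
    (measurableSet_le measurable_snd measurable_const).inter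
      (measurableSet_le measurable_const measurable_fst)
  rw [qcoupling, Measure.map_apply_of_aemeasurable (qcoupling_pair_aemeasurable μ ν) hs,
    Measure.restrict_apply' measurableSet_Ioo]
  exact vol_icdf_inter μ ν s t

lemma qcoupling_slice₂ (s t : ℝ) :
    qcoupling μ ν {p : ℝ × ℝ | p.1 ≤ s ∧ t ≤ p.2} = μ (Iic s) + ν (Ici t) - 1 := by
  have hs : MeasurableSet {p : ℝ × ℝ | p.1 ≤ s ∧ t ≤ p.2} :=
    (measurableSet_le measurable_fst measurable_const).inter
      (measurableSet_le measurable_const measurable_snd)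
  rw [qcoupling, Measure.map_apply_of_aemeasurable (qcoupling_pair_aemeasurable μ ν) hs,
    Measure.restrict_apply' measurableSet_Ioo]
  exact vol_icdf_inter ν μ s t

lemma prodU₁_le (γ : Measure (ℝ × ℝ)) [IsProbabilityMeasure γ]
    (h1 : γ.map Prod.fst = μ) (h2 : γ.map Prod.snd = ν) :
    ((qcoupling μ ν).prod volume) U₁ ≤ (γ.prod volume) U₁ := by
  rw [Measure.prod_apply_symm U₁_measurableSet, Measure.prod_apply_symm U₁_measurableSet]
  refine lintegral_mono fun q => ?_
  by_cases hq : q.1 < q.2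
  · have hV : ((fun p : ℝ × ℝ => (p, q)) ⁻¹' U₁) = {p : ℝ × ℝ | p.2 ≤ q.1 ∧ q.2 ≤ p.1} := by
      ext p; simp [U₁, hq]
    rw [hV]
    calc qcoupling μ ν {p : ℝ × ℝ | p.2 ≤ q.1 ∧ q.2 ≤ p.1}
        = ν (Iic q.1) + μ (Ici q.2) - 1 := qcoupling_slice₁ μ ν q.1 q.2
      _ ≤ γ {p : ℝ × ℝ | p.2 ≤ q.1 ∧ q.2 ≤ p.1} := gamma_ge₁ μ ν γ h1 h2 q.1 q.2
  · have hV : ((fun p : ℝ × ℝ => (p, q)) ⁻¹' U₁) = ∅ := by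
      ext p; simp [U₁, hq]
    simp [hV]

lemma prodU₂_le (γ : Measure (ℝ × ℝ)) [IsProbabilityMeasure γ]
    (h1 : γ.map Prod.fst = μ) (h2 : γ.map Prod.snd = ν) :
    ((qcoupling μ ν).prod volume) U₂ ≤ (γ.prod volume) U₂ := by
  rw [Measure.prod_apply_symm U₂_measurableSet, Measure.prod_apply_symm U₂_measurableSet]
  refine lintegral_mono fun q => ?_
  by_cases hq : q.1 < q.2
  · have hV : ((fun p : ℝ × ℝ => (p, q)) ⁻¹' U₂) = {p : ℝ × ℝ | p.1 ≤ q.1 ∧ q.2 ≤ p.2} := by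
      ext p; simp [U₂, hq]
    rw [hV]
    calc qcoupling μ ν {p : ℝ × ℝ | p.1 ≤ q.1 ∧ q.2 ≤ p.2}
        = μ (Iic q.1) + ν (Ici q.2) - 1 := qcoupling_slice₂ μ ν q.1 q.2
      _ ≤ γ {p : ℝ × ℝ | p.1 ≤ q.1 ∧ q.2 ≤ p.2} := gamma_ge₂ μ ν γ h1 h2 q.1 q.2
  · have hV : ((fun p : ℝ × ℝ => (p, q)) ⁻¹' U₂) = ∅ := by
      ext p; simp [U₂, hq]
    simp [hV]

lemma qcoupling_cost :
    ∫⁻ p, ENNReal.ofReal ((p.1 - p.2) ^ 2) ∂(qcoupling μ ν)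
      = ∫⁻ m in Icc (0:ℝ) 1, ENNReal.ofReal ((icdf μ m - icdf ν m) ^ 2) := by
  rw [qcoupling, lintegral_map' (f := fun p : ℝ × ℝ => ENNReal.ofReal ((p.1 - p.2) ^ 2))
    (((measurable_fst.sub measurable_snd).pow_const 2).ennreal_ofReal).aemeasurable
    (qcoupling_pair_aemeasurable μ ν),
    Measure.restrict_congr_set Ioo_ae_eq_Icc]

end Coupling

/-- For probability measures μ, ν on ℝ with finite second moments,
`W₂(μ,ν)² = ∫_0^1 |X_μ(m) - X_ν(m)|² dm` where `X_μ, X_ν` are the icdfs. -/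
theorem W2sq_eq_icdf_integral (μ ν : Measure ℝ)
    [IsProbabilityMeasure μ] [IsProbabilityMeasure ν]
    (hμ : ∫⁻ x, ENNReal.ofReal (x ^ 2) ∂μ < ⊤)
    (hν : ∫⁻ x, ENNReal.ofReal (x ^ 2) ∂ν < ⊤) :
    W2sq μ ν = ∫⁻ m in Icc (0:ℝ) 1, ENNReal.ofReal ((icdf μ m - icdf ν m) ^ 2) := by
  rw [W2sq]
  refine le_antisymm ?_ ?_
  · exact le_trans (iInf₂_le (qcoupling μ ν) ⟨qcoupling_fst μ ν, qcoupling_snd μ ν⟩)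
      (qcoupling_cost μ ν).le
  · refine le_iInf₂ fun γ hγ => ?_
    haveI := isProbabilityMeasure_of_fst μ γ hγ.1
    rw [← qcoupling_cost μ ν, cost_rep (qcoupling μ ν), cost_rep γ]
    exact mul_le_mul' le_rfl
      (add_le_add (prodU₁_le μ ν γ hγ.1 hγ.2) (prodU₂_le μ ν γ hγ.1 hγ.2))
end

section
/- Quantitative Pólya lemma: Let ν be a Lebesgue-absolutely-continuous probability measure on ℝ with CDF F. Then there exists a non-decreasing function ω : [0,∞) → [0,∞) with ω(s) → 0 as s → 0⁺, such that for every probability measure ν̄ on ℝ with CDF F̄, sup_{x∈ℝ} |F(x) - F̄(x)| ≤ ω(d_BL(ν, ν̄)). -/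
open MeasureTheory Set

/-- Dual bounded-Lipschitz distance:
`d_BL(μ,ν) = sup { ∫ f d(μ-ν) : ‖f‖_∞ + Lip f ≤ 1 }`. -/
noncomputable def dBL (μ ν : Measure ℝ) : ℝ :=
  sSup {r : ℝ | ∃ f : ℝ → ℝ, (∃ C K : ℝ, (∀ x, |f x| ≤ C) ∧
      (∀ x y, |f x - f y| ≤ K * |x - y|) ∧ C + K ≤ 1) ∧
    r = (∫ x, f x ∂μ) - ∫ x, f x ∂ν}

section aux

/-- the clamp function -/
noncomputable def clamp (t : ℝ) : ℝ := min 1 (max 0 t)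

lemma clamp_lip (a b : ℝ) : |clamp a - clamp b| ≤ |a - b| := by
  refine (abs_min_sub_min_le_max 1 (max 0 a) 1 (max 0 b)).trans ?_
  simp only [sub_self, abs_zero]
  refine max_le (abs_nonneg _) ?_
  exact (abs_max_sub_max_le_max 0 a 0 b).trans (by simp [abs_nonneg])

lemma clamp_nonneg (t : ℝ) : 0 ≤ clamp t := le_min zero_le_one (le_max_left 0 t)

lemma clamp_le_one (t : ℝ) : clamp t ≤ 1 := min_le_left _ _

lemma clamp_eq_one {t : ℝ} (h : 1 ≤ t) : clamp t = 1 := by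
  simp [clamp, max_eq_right (zero_le_one.trans h), min_eq_left h]

lemma clamp_eq_zero {t : ℝ} (h : t ≤ 0) : clamp t = 0 := by
  simp [clamp, max_eq_left h]

variable {μ ν' : Measure ℝ}

/-- test function -/
noncomputable def tf (x δ l t : ℝ) : ℝ := l * clamp ((x + δ - t) / δ)

lemma tf_cont (x δ l : ℝ) (hδ : 0 < δ) : Continuous (tf x δ l) := by
  unfold tf clamp
  fun_prop

lemma tf_abs_le (x δ l t : ℝ) (hl : 0 ≤ l) : |tf x δ l t| ≤ l := by
  rw [tf, abs_mul, abs_of_nonneg hl]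
  have h1 : |clamp ((x + δ - t) / δ)| ≤ 1 := by
    rw [abs_of_nonneg (clamp_nonneg _)]; exact clamp_le_one _
  calc l * |clamp ((x + δ - t)/δ)| ≤ l * 1 := by nlinarith
    _ = l := mul_one l

lemma tf_lip (x δ l s t : ℝ) (hδ : 0 < δ) (hl : 0 ≤ l) :
    |tf x δ l s - tf x δ l t| ≤ (l / δ) * |s - t| := by
  rw [tf, tf, ← mul_sub, abs_mul, abs_of_nonneg hl]
  have := clamp_lip ((x + δ - s) / δ) ((x + δ - t) / δ)
  have h2 : |(x + δ - s) / δ - (x + δ - t) / δ| = |s - t| / δ := by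
    rw [div_sub_div_same]
    have h3 : x + δ - s - (x + δ - t) = t - s := by ring
    rw [h3, abs_div, abs_of_pos hδ, abs_sub_comm]
  rw [h2] at this
  rw [div_mul_eq_mul_div, mul_div_assoc, ← mul_div_assoc l]
  have : l * |clamp ((x + δ - s) / δ) - clamp ((x + δ - t) / δ)| ≤ l * (|s - t| / δ) := by
    nlinarith
  calc l * |clamp ((x + δ - s)/δ) - clamp ((x + δ - t)/δ)| ≤ l * (|s - t| / δ) := this
    _ = l * |s - t| / δ := by ring

lemma tf_integrable (x δ l : ℝ) (hδ : 0 < δ) (hl : 0 ≤ l) [IsProbabilityMeasure μ] :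
    Integrable (tf x δ l) μ :=
  (integrable_const l).mono' ((tf_cont x δ l hδ).aestronglyMeasurable)
    (Filter.Eventually.of_forall fun t => by
      simpa [Real.norm_eq_abs] using tf_abs_le x δ l t hl)

lemma tf_integral_bounds (x δ l : ℝ) (hδ : 0 < δ) (hl : 0 ≤ l) [IsProbabilityMeasure μ] :
    l * (μ (Iio x)).toReal ≤ ∫ t, tf x δ l t ∂μ ∧
      ∫ t, tf x δ l t ∂μ ≤ l * (μ (Iio (x + δ))).toReal := by
  constructor
  · have h1 : ∀ t, (Iio x).indicator (fun _ => l) t ≤ tf x δ l t := by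
      intro t
      by_cases ht : t < x
      · rw [indicator_of_mem (show t ∈ Iio x from ht)]
        have : (1:ℝ) ≤ (x + δ - t) / δ := by
          rw [le_div_iff₀ hδ]; linarith
        rw [tf, clamp_eq_one this, mul_one]
      · rw [indicator_of_notMem (show t ∉ Iio x from ht)]
        exact mul_nonneg hl (clamp_nonneg _)
    have h2 : Integrable ((Iio x).indicator (fun _ => l)) μ :=
      (integrable_const l).indicator measurableSet_Iio
    calc l * (μ (Iio x)).toReal = ∫ t, (Iio x).indicator (fun _ => l) t ∂μ := by
          rw [integral_indicator_const _ measurableSet_Iio, smul_eq_mul, measureReal_def]; ring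
      _ ≤ ∫ t, tf x δ l t ∂μ := integral_mono h2 (tf_integrable x δ l hδ hl) h1
  · have h1 : ∀ t, tf x δ l t ≤ (Iio (x + δ)).indicator (fun _ => l) t := by
      intro t
      by_cases ht : t < x + δ
      · rw [indicator_of_mem (show t ∈ Iio (x+δ) from ht), tf]
        nlinarith [clamp_le_one ((x + δ - t) / δ), clamp_nonneg ((x + δ - t) / δ)]
      · rw [indicator_of_notMem (show t ∉ Iio (x+δ) from ht), tf, clamp_eq_zero, mul_zero]
        push_neg at ht
        apply div_nonpos_of_nonpos_of_nonneg <;> linarith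
    have h2 : Integrable ((Iio (x + δ)).indicator (fun _ => l)) μ :=
      (integrable_const l).indicator measurableSet_Iio
    calc ∫ t, tf x δ l t ∂μ ≤ ∫ t, (Iio (x + δ)).indicator (fun _ => l) t ∂μ :=
          integral_mono (tf_integrable x δ l hδ hl) h2 h1
      _ = l * (μ (Iio (x + δ))).toReal := by
          rw [integral_indicator_const _ measurableSet_Iio, smul_eq_mul, measureReal_def]; ring

/-- The dBL set is bounded above by 2. -/
lemma dBL_bddAbove (μ ν' : Measure ℝ) [IsProbabilityMeasure μ] [IsProbabilityMeasure ν'] :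
    BddAbove {r : ℝ | ∃ f : ℝ → ℝ, (∃ C K : ℝ, (∀ x, |f x| ≤ C) ∧
      (∀ x y, |f x - f y| ≤ K * |x - y|) ∧ C + K ≤ 1) ∧
    r = (∫ x, f x ∂μ) - ∫ x, f x ∂ν'} := by
  refine ⟨2, ?_⟩
  rintro r ⟨f, ⟨C, K, hC, hK, hCK⟩, rfl⟩
  have hK0 : 0 ≤ K := by
    have := hK 0 1
    simpa using (abs_nonneg (f 0 - f 1)).trans this
  have hC1 : C ≤ 1 := by linarith
  have h1 : ‖∫ x, f x ∂μ‖ ≤ C * (μ univ).toReal :=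
    norm_integral_le_of_norm_le_const (Filter.Eventually.of_forall fun t => by
      simpa [Real.norm_eq_abs] using hC t)
  have h2 : ‖∫ x, f x ∂ν'‖ ≤ C * (ν' univ).toReal :=
    norm_integral_le_of_norm_le_const (Filter.Eventually.of_forall fun t => by
      simpa [Real.norm_eq_abs] using hC t)
  simp only [measure_univ, ENNReal.toReal_one, mul_one, Real.norm_eq_abs] at h1 h2
  have := abs_le.mp h1
  have := abs_le.mp h2
  linarith

lemma tf_mem_dBL (μ ν' : Measure ℝ) (x δ : ℝ) (hδ : 0 < δ) :
    ((∫ t, tf x δ (δ / (1 + δ)) t ∂μ) - ∫ t, tf x δ (δ / (1 + δ)) t ∂ν')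
      ∈ {r : ℝ | ∃ f : ℝ → ℝ, (∃ C K : ℝ, (∀ x, |f x| ≤ C) ∧
        (∀ x y, |f x - f y| ≤ K * |x - y|) ∧ C + K ≤ 1) ∧
      r = (∫ x, f x ∂μ) - ∫ x, f x ∂ν'} := by
  have hl : 0 ≤ δ / (1 + δ) := by positivity
  refine ⟨tf x δ (δ / (1 + δ)), ⟨δ / (1 + δ), (δ / (1 + δ)) / δ,
    fun t => tf_abs_le x δ _ t hl, fun s t => tf_lip x δ _ s t hδ hl, ?_⟩, rfl⟩
  exact le_of_eq (by field_simp; ring)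

lemma neg_tf_mem_dBL (μ ν' : Measure ℝ) (x δ : ℝ) (hδ : 0 < δ)
    [IsProbabilityMeasure μ] [IsProbabilityMeasure ν'] :
    ((∫ t, tf x δ (δ / (1 + δ)) t ∂ν') - ∫ t, tf x δ (δ / (1 + δ)) t ∂μ)
      ∈ {r : ℝ | ∃ f : ℝ → ℝ, (∃ C K : ℝ, (∀ x, |f x| ≤ C) ∧
        (∀ x y, |f x - f y| ≤ K * |x - y|) ∧ C + K ≤ 1) ∧
      r = (∫ x, f x ∂μ) - ∫ x, f x ∂ν'} := by
  have hl : 0 ≤ δ / (1 + δ) := by positivity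
  refine ⟨fun t => -(tf x δ (δ / (1 + δ)) t), ⟨δ / (1 + δ), (δ / (1 + δ)) / δ,
    fun t => by simpa using tf_abs_le x δ _ t hl,
    fun s t => by
      rw [neg_sub_neg, abs_sub_comm]
      exact tf_lip x δ _ s t hδ hl, ?_⟩, ?_⟩
  · exact le_of_eq (by field_simp; ring)
  · rw [integral_neg, integral_neg]; ring

/-- Key inequality (a): `F'(x) ≤ F(x+δ) + (1+δ)/δ * dBL ν ν'`. -/
lemma key_a (ν ν' : Measure ℝ) [IsProbabilityMeasure ν] [IsProbabilityMeasure ν']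
    (x δ : ℝ) (hδ : 0 < δ) :
    (ν' (Iio x)).toReal ≤ (ν (Iio (x + δ))).toReal + (1 + δ) / δ * dBL ν ν' := by
  set l := δ / (1 + δ) with hl_def
  have hl : 0 < l := by positivity
  have h1 := (tf_integral_bounds (μ := ν') x δ l hδ hl.le).1
  have h2 := (tf_integral_bounds (μ := ν) x δ l hδ hl.le).2
  have hmem := neg_tf_mem_dBL ν ν' x δ hδ
  have hle : (∫ t, tf x δ l t ∂ν') - ∫ t, tf x δ l t ∂ν ≤ dBL ν ν' :=
    le_csSup (dBL_bddAbove ν ν') hmem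
  have key : l * (ν' (Iio x)).toReal - l * (ν (Iio (x + δ))).toReal ≤ dBL ν ν' := by linarith
  have hinv : (1 + δ) / δ = l⁻¹ := by
    rw [hl_def]; field_simp
  rw [hinv, ← sub_le_iff_le_add']
  calc (ν' (Iio x)).toReal - (ν (Iio (x + δ))).toReal
      = l⁻¹ * (l * (ν' (Iio x)).toReal - l * (ν (Iio (x + δ))).toReal) := by
        field_simp
    _ ≤ l⁻¹ * dBL ν ν' := by
        apply mul_le_mul_of_nonneg_left key (by positivity)

/-- Key inequality (b): `F(x) ≤ F'(x+δ) + (1+δ)/δ * dBL ν ν'`. -/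
lemma key_b (ν ν' : Measure ℝ) [IsProbabilityMeasure ν] [IsProbabilityMeasure ν']
    (x δ : ℝ) (hδ : 0 < δ) :
    (ν (Iio x)).toReal ≤ (ν' (Iio (x + δ))).toReal + (1 + δ) / δ * dBL ν ν' := by
  set l := δ / (1 + δ) with hl_def
  have hl : 0 < l := by positivity
  have h1 := (tf_integral_bounds (μ := ν) x δ l hδ hl.le).1
  have h2 := (tf_integral_bounds (μ := ν') x δ l hδ hl.le).2
  have hmem := tf_mem_dBL ν ν' x δ hδ
  have hle : (∫ t, tf x δ l t ∂ν) - ∫ t, tf x δ l t ∂ν' ≤ dBL ν ν' :=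
    le_csSup (dBL_bddAbove ν ν') hmem
  have key : l * (ν (Iio x)).toReal - l * (ν' (Iio (x + δ))).toReal ≤ dBL ν ν' := by linarith
  have hinv : (1 + δ) / δ = l⁻¹ := by
    rw [hl_def]; field_simp
  rw [hinv, ← sub_le_iff_le_add']
  calc (ν (Iio x)).toReal - (ν' (Iio (x + δ))).toReal
      = l⁻¹ * (l * (ν (Iio x)).toReal - l * (ν' (Iio (x + δ))).toReal) := by
        field_simp
    _ ≤ l⁻¹ * dBL ν ν' := mul_le_mul_of_nonneg_left key (by positivity)

lemma toReal_prob_le_one (μ : Measure ℝ) [IsProbabilityMeasure μ] (s : Set ℝ) :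
    (μ s).toReal ≤ 1 := by
  have h : μ s ≤ 1 := prob_le_one
  exact ENNReal.toReal_le_of_le_ofReal zero_le_one (by simpa using h)

/-- Uniform continuity of the CDF from absolute continuity. -/
lemma cdf_unif_cont (ν : Measure ℝ) [IsProbabilityMeasure ν] (hac : ν ≪ volume)
    {ε : ℝ} (hε : 0 < ε) :
    ∃ δ > 0, ∀ x : ℝ, (ν (Iio (x + δ))).toReal ≤ (ν (Iio x)).toReal + ε := by
  have hfin : ∫⁻ x, ν.rnDeriv volume x ∂volume ≠ ⊤ := by
    rw [Measure.lintegral_rnDeriv hac]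
    simp
  obtain ⟨η, hη, hset⟩ := exists_pos_setLIntegral_lt_of_measure_lt (μ := volume)
    hfin (ε := ENNReal.ofReal ε) (by simp [hε])
  set η' := min η 1 with hη'
  have hη'pos : 0 < η' := lt_min hη zero_lt_one
  have hη'top : η' ≠ ⊤ := ne_top_of_le_ne_top ENNReal.one_ne_top (min_le_right _ _)
  set δ := η'.toReal / 2 with hδdef
  have hδpos : 0 < δ := by
    have := ENNReal.toReal_pos hη'pos.ne' hη'top
    positivity
  refine ⟨δ, hδpos, fun x => ?_⟩
  have hvol : volume (Ico x (x + δ)) < η := by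
    rw [Real.volume_Ico]
    have h1 : ENNReal.ofReal (x + δ - x) = ENNReal.ofReal δ := by norm_num
    rw [h1]
    calc ENNReal.ofReal δ < ENNReal.ofReal η'.toReal := by
          rw [ENNReal.ofReal_lt_ofReal_iff (ENNReal.toReal_pos hη'pos.ne' hη'top)]
          rw [hδdef]
          linarith [ENNReal.toReal_pos hη'pos.ne' hη'top]
      _ = η' := ENNReal.ofReal_toReal hη'top
      _ ≤ η := min_le_left _ _
  have hν : ν (Ico x (x + δ)) < ENNReal.ofReal ε := by
    rw [← Measure.setLIntegral_rnDeriv' hac measurableSet_Ico]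
    exact hset _ hvol
  have hsplit : ν (Iio (x + δ)) = ν (Iio x) + ν (Ico x (x + δ)) := by
    rw [← Iio_union_Ico_eq_Iio (by linarith : x ≤ x + δ)]
    exact measure_union (by
      rw [Set.disjoint_left]
      rintro a (ha : a < x) ⟨ha2, _⟩
      exact absurd ha2 (not_le.mpr ha)) measurableSet_Ico
  rw [hsplit, ENNReal.toReal_add (measure_ne_top ν _) (measure_ne_top ν _)]
  have : (ν (Ico x (x + δ))).toReal ≤ ε :=
    ENNReal.toReal_le_of_le_ofReal hε.le hν.le
  linarith

end aux

/-- **Quantitative Pólya lemma.** Let ν be a Lebesgue-absolutely-continuous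
probability measure on ℝ with CDF `F x = ν((-∞,x))`. Then there is a non-decreasing
function `ω : [0,∞) → [0,∞)` with `ω(s) → 0` as `s → 0⁺` such that for every probability
measure ν̄, `sup_x |F(x) - F̄(x)| ≤ ω(d_BL(ν,ν̄))`. -/
theorem quantitative_polya (ν : Measure ℝ) [IsProbabilityMeasure ν] (hac : ν ≪ volume) :
    ∃ ω : ℝ → ℝ, MonotoneOn ω (Ici 0) ∧ (∀ s, 0 ≤ s → 0 ≤ ω s) ∧
      Filter.Tendsto ω (nhdsWithin 0 (Ioi 0)) (nhds 0) ∧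
      ∀ ν' : Measure ℝ, IsProbabilityMeasure ν' →
        ∀ x : ℝ, |(ν (Iio x)).toReal - (ν' (Iio x)).toReal| ≤ ω (dBL ν ν') := by
  classical
  set S : ℝ → Set ℝ := fun s => {r : ℝ | ∃ ν' : Measure ℝ, ∃ _ : IsProbabilityMeasure ν',
    dBL ν ν' ≤ s ∧ ∃ x : ℝ, r = |(ν (Iio x)).toReal - (ν' (Iio x)).toReal|} with hS
  have hbdd : ∀ s, BddAbove (S s) := by
    intro s
    refine ⟨2, ?_⟩
    rintro r ⟨ν', hprob, _, x, rfl⟩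
    have h1 := toReal_prob_le_one ν (Iio x)
    have h2 := toReal_prob_le_one ν' (Iio x)
    have h3 : (0:ℝ) ≤ (ν (Iio x)).toReal := ENNReal.toReal_nonneg
    have h4 : (0:ℝ) ≤ (ν' (Iio x)).toReal := ENNReal.toReal_nonneg
    rw [abs_le]
    constructor <;> linarith
  have hzero : dBL ν ν = 0 := by
    have hset : {r : ℝ | ∃ f : ℝ → ℝ, (∃ C K : ℝ, (∀ x, |f x| ≤ C) ∧
        (∀ x y, |f x - f y| ≤ K * |x - y|) ∧ C + K ≤ 1) ∧
      r = (∫ x, f x ∂ν) - ∫ x, f x ∂ν} = {0} := by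
      ext r
      simp only [mem_setOf_eq, mem_singleton_iff]
      constructor
      · rintro ⟨f, _, rfl⟩; ring
      · rintro rfl
        exact ⟨fun _ => 0, ⟨0, 0, fun x => by simp, fun x y => by simp, by norm_num⟩, by simp⟩
    rw [dBL, hset, csSup_singleton]
  have hmem0 : ∀ s : ℝ, 0 ≤ s → (0:ℝ) ∈ S s := by
    intro s hs
    exact ⟨ν, inferInstance, by rw [hzero]; exact hs, 0, by simp⟩
  refine ⟨fun s => sSup (S s), ?_, ?_, ?_, ?_⟩
  · intro s hs t ht hst
    exact csSup_le_csSup (hbdd t) ⟨0, hmem0 s hs⟩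
      (by rintro r ⟨ν', hprob, hd, x, rfl⟩; exact ⟨ν', hprob, hd.trans hst, x, rfl⟩)
  · intro s hs
    exact le_csSup (hbdd s) (hmem0 s hs)
  · rw [Metric.tendsto_nhdsWithin_nhds]
    intro ε hε
    obtain ⟨δ, hδ, huc⟩ := cdf_unif_cont ν hac (show (0:ℝ) < ε/4 by linarith)
    refine ⟨ε/4 * (δ/(1+δ)), by positivity, fun s hs hdist => ?_⟩
    have hs0 : 0 < s := hs
    rw [Real.dist_eq, sub_zero, abs_of_pos hs0] at hdist
    have hωle : sSup (S s) ≤ ε/2 := by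
      apply csSup_le ⟨0, hmem0 s hs0.le⟩
      rintro r ⟨ν', hprob, hd, x, rfl⟩
      have hfrac : 0 < (1+δ)/δ := by positivity
      have hmul : (1+δ)/δ * dBL ν ν' ≤ ε/4 := by
        have h1 : (1+δ)/δ * dBL ν ν' ≤ (1+δ)/δ * s :=
          mul_le_mul_of_nonneg_left hd hfrac.le
        have h2 : (1+δ)/δ * s ≤ (1+δ)/δ * (ε/4 * (δ/(1+δ))) :=
          mul_le_mul_of_nonneg_left hdist.le hfrac.le
        have h3 : (1+δ)/δ * (ε/4 * (δ/(1+δ))) = ε/4 := by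
          field_simp
        linarith
      have ha := key_a ν ν' x δ hδ
      have hb := key_b ν ν' (x - δ) δ hδ
      rw [sub_add_cancel] at hb
      have huc1 := huc x
      have huc2 := huc (x - δ)
      rw [sub_add_cancel] at huc2
      rw [abs_le]
      constructor <;> linarith
    have hω0 : 0 ≤ sSup (S s) := le_csSup (hbdd s) (hmem0 s hs0.le)
    rw [Real.dist_eq, sub_zero, abs_of_nonneg hω0]
    linarith
  · intro ν' hprob x
    exact le_csSup (hbdd _) ⟨ν', hprob, le_refl _, x, rfl⟩
end
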